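/- Let Σ be a real (n+n)×(n+n) matrix written in block form Σ = [[Σ₁₁, Σ₁₂],[Σ₁₂ᵀ, Σ₂₂]] with each block n×n, and suppose Σ is symmetric positive definite. Define Z = Σ₁₁⁻¹ and P = Σ₁₁ − Σ₁₂·Σ₂₂⁻¹·Σ₁₂ᵀ. Then Z is positive definite, P is positive definite, Z⁻¹ − P = Σ₁₂·Σ₂₂⁻¹·Σ₁₂ᵀ is positive semidefinite, and consequently every eigenvalue λ ∈ ℂ of Z·P (regarded as a complex matrix via the entrywise embedding ℝ → ℂ) satisfies |λ| ≤ 1. -/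

import Mathlib

open Matrix

section Aux
variable {n : ℕ}

private lemma dot_sym' (A : Matrix (Fin n) (Fin n) ℝ) (hA : Aᵀ = A) (a b : Fin n → ℝ) :
    a ⬝ᵥ A *ᵥ b = b ⬝ᵥ A *ᵥ a := by
  rw [dotProduct_mulVec, ← mulVec_transpose, hA, dotProduct_comm]

private lemma dot_ofReal' (A : Matrix (Fin n) (Fin n) ℝ) (hA : Aᵀ = A) (v : Fin n → ℂ) :
    star v ⬝ᵥ (A.map (Complex.ofReal)) *ᵥ v =
      ((((fun i => (v i).re) ⬝ᵥ A *ᵥ (fun i => (v i).re)) +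
       ((fun i => (v i).im) ⬝ᵥ A *ᵥ (fun i => (v i).im)) : ℝ) : ℂ) := by
  classical
  set x : Fin n → ℝ := fun i => (v i).re with hx
  set y : Fin n → ℝ := fun i => (v i).im with hy
  have ha : ∀ (z : Fin n → ℝ) (w : Fin n → ℝ),
      ((z ⬝ᵥ A *ᵥ w : ℝ) : ℂ) =
        (Complex.ofReal ∘ z) ⬝ᵥ (A.map Complex.ofReal) *ᵥ (Complex.ofReal ∘ w) := by
    intro z w
    rw [show ((z ⬝ᵥ A *ᵥ w : ℝ) : ℂ) = Complex.ofRealHom (z ⬝ᵥ A *ᵥ w) from rfl,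
      RingHom.map_dotProduct]
    congr 1
    funext i
    exact RingHom.map_mulVec Complex.ofRealHom A w i
  have hv : v = (Complex.ofReal ∘ x) + Complex.I • (Complex.ofReal ∘ y) := by
    funext i
    simp only [Pi.add_apply, Pi.smul_apply, Function.comp_apply, smul_eq_mul]
    rw [mul_comm]
    exact (Complex.re_add_im (v i)).symm
  have hsv : star v = (Complex.ofReal ∘ x) - Complex.I • (Complex.ofReal ∘ y) := by
    funext i
    have : star (v i) = Complex.ofReal (x i) - Complex.I * Complex.ofReal (y i) := by
      apply Complex.ext <;> simp [x, y]
    simpa [sub_eq_add_neg, mul_comm] using this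
  rw [hsv]
  nth_rewrite 1 [hv]
  rw [mulVec_add, mulVec_smul, sub_dotProduct, dotProduct_add, dotProduct_add,
    smul_dotProduct, smul_dotProduct, dotProduct_smul, dotProduct_smul]
  have hmix : (Complex.ofReal ∘ x) ⬝ᵥ (A.map Complex.ofReal) *ᵥ (Complex.ofReal ∘ y)
      = (Complex.ofReal ∘ y) ⬝ᵥ (A.map Complex.ofReal) *ᵥ (Complex.ofReal ∘ x) := by
    rw [← ha, ← ha, dot_sym' A hA]
  rw [hmix, Complex.ofReal_add, ha x x, ha y y, smul_smul, Complex.I_mul_I, neg_one_smul]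
  simp only [smul_eq_mul]
  ring

private lemma blocks_posDef' {A B D : Matrix (Fin n) (Fin n) ℝ}
    (h : (fromBlocks A B Bᵀ D).PosDef) : A.PosDef ∧ D.PosDef := by
  obtain ⟨hH, hpos⟩ := posDef_iff_dotProduct_mulVec.mp h
  rw [IsHermitian, fromBlocks_conjTranspose, fromBlocks_inj] at hH
  refine ⟨PosDef.of_dotProduct_mulVec_pos hH.1 (fun x hx => ?_), PosDef.of_dotProduct_mulVec_pos hH.2.2.2 (fun x hx => ?_)⟩
  · have h0 : Sum.elim x (0 : Fin n → ℝ) ≠ 0 := fun h0 =>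
      hx (funext fun i => congrFun h0 (Sum.inl i))
    have := hpos h0
    simpa [Function.star_sumElim, fromBlocks_mulVec, sumElim_dotProduct_sumElim] using this
  · have h0 : Sum.elim (0 : Fin n → ℝ) x ≠ 0 := fun h0 =>
      hx (funext fun i => congrFun h0 (Sum.inr i))
    have := hpos h0
    simpa [Function.star_sumElim, fromBlocks_mulVec, sumElim_dotProduct_sumElim] using this

private lemma pair_pos' {A : Matrix (Fin n) (Fin n) ℝ} (hA : A.PosDef) {v : Fin n → ℂ}
    (hv : v ≠ 0) :
    0 < (fun i => (v i).re) ⬝ᵥ A *ᵥ (fun i => (v i).re)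
      + (fun i => (v i).im) ⬝ᵥ A *ᵥ (fun i => (v i).im) := by
  set x : Fin n → ℝ := fun i => (v i).re
  set y : Fin n → ℝ := fun i => (v i).im
  have hxy : x ≠ 0 ∨ y ≠ 0 := by
    by_contra hc
    push_neg at hc
    exact hv (funext fun i => Complex.ext
      (by simpa using congrFun hc.1 i) (by simpa using congrFun hc.2 i))
  have hxn : 0 ≤ x ⬝ᵥ A *ᵥ x := by simpa using hA.posSemidef.dotProduct_mulVec_nonneg x
  have hyn : 0 ≤ y ⬝ᵥ A *ᵥ y := by simpa using hA.posSemidef.dotProduct_mulVec_nonneg y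
  rcases hxy with h | h
  · have : 0 < x ⬝ᵥ A *ᵥ x := by simpa using hA.dotProduct_mulVec_pos h
    linarith
  · have : 0 < y ⬝ᵥ A *ᵥ y := by simpa using hA.dotProduct_mulVec_pos h
    linarith

end Aux

theorem stmt_6 {n : ℕ} (S₁₁ S₁₂ S₂₂ : Matrix (Fin n) (Fin n) ℝ)
    (hSg : (fromBlocks S₁₁ S₁₂ S₁₂ᵀ S₂₂).PosDef)
    (Z P : Matrix (Fin n) (Fin n) ℝ)
    (hZ : Z = S₁₁⁻¹) (hP : P = S₁₁ - S₁₂ * S₂₂⁻¹ * S₁₂ᵀ) :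
    Z.PosDef ∧ P.PosDef ∧
    Z⁻¹ - P = S₁₂ * S₂₂⁻¹ * S₁₂ᵀ ∧
    (S₁₂ * S₂₂⁻¹ * S₁₂ᵀ).PosSemidef ∧
    (∀ lam : ℂ, lam ∈ spectrum ℂ ((Z * P).map (Complex.ofReal)) →
      ‖lam‖ ≤ 1) := by
  classical
  obtain ⟨hS11, hS22⟩ := blocks_posDef' hSg
  haveI : Invertible S₂₂ := hS22.isUnit.invertible
  have hT : (S₁₂)ᴴ = S₁₂ᵀ := conjTranspose_eq_transpose_of_trivial _
  -- PSD of S₁₂ * S₂₂⁻¹ * S₁₂ᵀ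
  have hQ : (S₁₂ * S₂₂⁻¹ * S₁₂ᵀ).PosSemidef := by
    rw [← hT]
    exact hS22.inv.posSemidef.mul_mul_conjTranspose_same S₁₂
  -- P PosDef
  have hPherm : P.IsHermitian := by
    rw [hP]
    exact hS11.1.sub hQ.1
  have hPd : P.PosDef := by
    refine PosDef.of_dotProduct_mulVec_pos hPherm (fun x hx => ?_)
    have hSg' : (fromBlocks S₁₁ S₁₂ S₁₂ᴴ S₂₂).PosDef := by rwa [hT]
    set y : Fin n → ℝ := -((S₂₂⁻¹ * S₁₂ᴴ) *ᵥ x) with hy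
    have h0 : Sum.elim x y ≠ 0 := fun h0 => hx (funext fun i => congrFun h0 (Sum.inl i))
    have hpos := hSg'.dotProduct_mulVec_pos h0
    rw [dotProduct_mulVec, schur_complement_eq₂₂ S₁₁ S₁₂ x y hS22.1] at hpos
    rw [hy, add_neg_cancel] at hpos
    simpa [hP, hT, ← dotProduct_mulVec] using hpos
  -- Z⁻¹ - P
  have hZinv : Z⁻¹ = S₁₁ := by
    rw [hZ, Matrix.nonsing_inv_nonsing_inv _ ((Matrix.isUnit_iff_isUnit_det S₁₁).mp hS11.isUnit)]
  have hdiff : Z⁻¹ - P = S₁₂ * S₂₂⁻¹ * S₁₂ᵀ := by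
    rw [hZinv, hP, sub_sub_cancel]
  refine ⟨hZ ▸ hS11.inv, hPd, hdiff, hQ, ?_⟩
  -- eigenvalue bound
  intro lam hlam
  set Mc := (Z * P).map Complex.ofReal with hMc
  have hdet : (lam • (1 : Matrix (Fin n) (Fin n) ℂ) - Mc).det = 0 := by
    by_contra hne
    rw [spectrum.mem_iff] at hlam
    exact hlam (by
      rw [Algebra.algebraMap_eq_smul_one]
      exact (Matrix.isUnit_iff_isUnit_det _).2 (isUnit_iff_ne_zero.2 hne))
  obtain ⟨v, hv0, hveq⟩ := (Matrix.exists_mulVec_eq_zero_iff).2 hdet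
  have hMv : Mc *ᵥ v = lam • v := by
    have h1 : (lam • (1 : Matrix (Fin n) (Fin n) ℂ)) *ᵥ v - Mc *ᵥ v = 0 := by
      rw [← sub_mulVec]; exact hveq
    have h2 : (lam • (1 : Matrix (Fin n) (Fin n) ℂ)) *ᵥ v = lam • v := by
      rw [smul_mulVec, one_mulVec]
    rw [h2] at h1
    exact (sub_eq_zero.mp h1).symm
  -- pass to P and S₁₁
  have hmulZ : S₁₁ * Z = 1 := by
    rw [hZ, Matrix.mul_nonsing_inv _ ((Matrix.isUnit_iff_isUnit_det S₁₁).mp hS11.isUnit)]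
  have mapmul : ∀ (M N : Matrix (Fin n) (Fin n) ℝ),
      (M * N).map Complex.ofReal = M.map Complex.ofReal * N.map Complex.ofReal := by
    intro M N
    ext i j
    simp [Matrix.mul_apply, Matrix.map_apply]
  have hMcP : (S₁₁.map Complex.ofReal) * Mc = P.map Complex.ofReal := by
    rw [hMc, mapmul, ← Matrix.mul_assoc,
      show S₁₁.map Complex.ofReal * Z.map Complex.ofReal = 1 by
        rw [← mapmul, hmulZ]
        exact Matrix.map_one _ (by simp) (by simp),
      Matrix.one_mul]
  have hPv : (P.map Complex.ofReal) *ᵥ v = lam • ((S₁₁.map Complex.ofReal) *ᵥ v) := by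
    rw [← hMcP, ← mulVec_mulVec, hMv, mulVec_smul]
  -- real quantities
  set x : Fin n → ℝ := fun i => (v i).re with hxdef
  set y : Fin n → ℝ := fun i => (v i).im with hydef
  set ra : ℝ := x ⬝ᵥ P *ᵥ x + y ⬝ᵥ P *ᵥ y with hra
  set rb : ℝ := x ⬝ᵥ S₁₁ *ᵥ x + y ⬝ᵥ S₁₁ *ᵥ y with hrb
  have hPT : Pᵀ = P := by
    rw [← conjTranspose_eq_transpose_of_trivial]; exact hPherm
  have hST : S₁₁ᵀ = S₁₁ := by
    rw [← conjTranspose_eq_transpose_of_trivial]; exact hS11.1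
  have haC : star v ⬝ᵥ (P.map Complex.ofReal) *ᵥ v = (ra : ℂ) := dot_ofReal' P hPT v
  have hbC : star v ⬝ᵥ (S₁₁.map Complex.ofReal) *ᵥ v = (rb : ℂ) := dot_ofReal' S₁₁ hST v
  have hab : (ra : ℂ) = lam * (rb : ℂ) := by
    rw [← haC, ← hbC, hPv, dotProduct_smul, smul_eq_mul]
  have rapos : 0 < ra := pair_pos' hPd hv0
  have rbpos : 0 < rb := pair_pos' hS11 hv0
  have hle : ra ≤ rb := by
    have hQ2x : 0 ≤ x ⬝ᵥ (S₁₁ - P) *ᵥ x := by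
      have := hQ.dotProduct_mulVec_nonneg x
      rw [show S₁₁ - P = S₁₂ * S₂₂⁻¹ * S₁₂ᵀ by rw [hP, sub_sub_cancel]]
      simpa using this
    have hQ2y : 0 ≤ y ⬝ᵥ (S₁₁ - P) *ᵥ y := by
      have := hQ.dotProduct_mulVec_nonneg y
      rw [show S₁₁ - P = S₁₂ * S₂₂⁻¹ * S₁₂ᵀ by rw [hP, sub_sub_cancel]]
      simpa using this
    rw [sub_mulVec, dotProduct_sub] at hQ2x hQ2y
    rw [hra, hrb]
    linarith
  have hrbne : (rb : ℂ) ≠ 0 := by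
    exact_mod_cast rbpos.ne'
  have hlamval : lam = ((ra / rb : ℝ) : ℂ) := by
    rw [Complex.ofReal_div]
    rw [eq_div_iff hrbne]
    exact hab.symm
  rw [hlamval, Complex.norm_real, Real.norm_eq_abs, abs_of_nonneg (div_nonneg rapos.le rbpos.le)]
  exact div_le_one_of_le₀ hle rbpos.le
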